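/- (Wasserstein autoencoder theorem, kernel form.) Let X and Z be standard Borel spaces, P_X a probability measure on X, P_Z a probability measure on Z, g : Z → X measurable and c : X × X → [0,∞] measurable. Then W_c(P_X, g#P_Z) = inf over all Markov kernels Q from X to Z whose P_X-mixture equals P_Z (i.e. A ↦ ∫ Q(x)(A) dP_X(x) equals P_Z) of ∫_X ∫_Z c(x, g(z)) dQ(x)(z) dP_X(x). -/

import Mathlib

open MeasureTheory ProbabilityTheory ENNReal

/-- The Wasserstein (optimal transport) cost between two measures on `X` for a cost
function `c : X × X → ℝ≥0∞`: the infimum, over all couplings `π` of `μ` and `ν`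
(probability measures on `X × X` whose first and second marginals are `μ` and `ν`),
of `∫ c dπ`. -/
noncomputable def wassersteinCost {X : Type*} [MeasurableSpace X]
    (c : X × X → ℝ≥0∞) (μ ν : Measure X) : ℝ≥0∞ :=
  ⨅ (π : Measure (X × X)) (_ : IsProbabilityMeasure π)
    (_ : π.map Prod.fst = μ) (_ : π.map Prod.snd = ν), ∫⁻ p, c p ∂π

/-- The second marginal of a composition-product is the bind. -/
lemma bind_eq_map_snd_compProd {α β : Type*} [MeasurableSpace α] [MeasurableSpace β]
    (μ : Measure α) [SFinite μ] (κ : Kernel α β) [IsSFiniteKernel κ] :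
    μ.bind (fun x => κ x) = (μ ⊗ₘ κ).map Prod.snd := by
  ext s hs
  rw [Measure.bind_apply hs (Kernel.measurable κ).aemeasurable,
    Measure.map_apply measurable_snd hs, Measure.compProd_apply (measurable_snd hs)]
  rfl

/-- Wasserstein autoencoder theorem, kernel form: `W_c(P_X, g#P_Z)` equals the infimum
over all Markov kernels `Q` from `X` to `Z` whose `P_X`-mixture equals `P_Z` of
`∫∫ c (x, g z) dQ(x)(z) dP_X(x)`. -/
theorem wassersteinCost_eq_iInf_kernel
    {X Z : Type*} [MeasurableSpace X] [StandardBorelSpace X]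
    [MeasurableSpace Z] [StandardBorelSpace Z]
    (P_X : Measure X) [IsProbabilityMeasure P_X]
    (P_Z : Measure Z) [IsProbabilityMeasure P_Z]
    (g : Z → X) (hg : Measurable g)
    (c : X × X → ℝ≥0∞) (hc : Measurable c) :
    wassersteinCost c P_X (P_Z.map g) =
      ⨅ (Q : Kernel X Z) (_ : IsMarkovKernel Q) (_ : P_X.bind (fun x => Q x) = P_Z),
        ∫⁻ x, ∫⁻ z, c (x, g z) ∂(Q x) ∂P_X := by
  have hcm : Measurable fun p : X × Z => c (p.1, g p.2) :=
    hc.comp (measurable_fst.prodMk (hg.comp measurable_snd))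
  apply le_antisymm
  · -- `≤`: from a kernel `Q` build the coupling `(id × g)₊(P_X ⊗ₘ Q)`.
    refine le_iInf fun Q => le_iInf fun hQ => le_iInf fun hbind => ?_
    have hmeas : Measurable (fun p : X × Z => (p.1, g p.2)) :=
      measurable_fst.prodMk (hg.comp measurable_snd)
    set π : Measure (X × X) := (P_X ⊗ₘ Q).map (fun p => (p.1, g p.2)) with hπ
    haveI : IsProbabilityMeasure π := Measure.isProbabilityMeasure_map hmeas.aemeasurable
    have h1 : π.map Prod.fst = P_X := by
      rw [hπ, Measure.map_map measurable_fst hmeas]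
      have he : (Prod.fst ∘ fun p : X × Z => (p.1, g p.2)) = Prod.fst := rfl
      rw [he]
      exact Measure.fst_compProd P_X Q
    have h2 : π.map Prod.snd = P_Z.map g := by
      rw [hπ, Measure.map_map measurable_snd hmeas]
      have he : (Prod.snd ∘ fun p : X × Z => (p.1, g p.2)) = g ∘ Prod.snd := rfl
      rw [he, ← Measure.map_map hg measurable_snd, ← bind_eq_map_snd_compProd, hbind]
    calc wassersteinCost c P_X (P_Z.map g) ≤ ∫⁻ p, c p ∂π :=
          iInf_le_of_le π (iInf_le_of_le ‹_› (iInf_le_of_le h1 (iInf_le_of_le h2 le_rfl)))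
      _ = ∫⁻ x, ∫⁻ z, c (x, g z) ∂(Q x) ∂P_X := by
          rw [hπ, lintegral_map hc hmeas,
            Measure.lintegral_compProd (f := fun p : X × Z => c (p.1, g p.2)) hcm]
  · -- `≥`: from a coupling `π` build a kernel using disintegration.
    refine le_iInf fun π => le_iInf fun hπprob => le_iInf fun h1 => le_iInf fun h2 => ?_
    haveI : Nonempty Z := by
      by_contra h
      rw [not_nonempty_iff] at h
      have h1' : (Set.univ : Set Z) = ∅ := Set.univ_eq_empty_iff.mpr h
      have h2' := measure_univ (μ := P_Z)
      rw [h1'] at h2'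
      simp at h2'
    -- the conditional distribution of `z` given `g z`
    have hgm : Measurable fun z : Z => (g z, z) := hg.prodMk measurable_id
    set ρ : Measure (X × Z) := P_Z.map (fun z => (g z, z)) with hρ
    haveI : IsProbabilityMeasure ρ := Measure.isProbabilityMeasure_map hgm.aemeasurable
    set κ : Kernel X Z := ρ.condKernel with hκ
    haveI hκM : IsMarkovKernel κ := by rw [hκ]; infer_instance
    have hρfst : ρ.fst = P_Z.map g := by
      rw [hρ, Measure.fst, Measure.map_map measurable_fst hgm]; rfl
    have hdis : (P_Z.map g) ⊗ₘ κ = ρ := by rw [← hρfst, hκ]; exact ρ.disintegrate _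
    have hD : MeasurableSet {p : X × Z | p.1 = g p.2} := by
      letI := upgradeStandardBorel X
      exact StronglyMeasurable.measurableSet_eq_fun
        measurable_fst.stronglyMeasurable (hg.comp measurable_snd).stronglyMeasurable
    have hae : ∀ᵐ x ∂(P_Z.map g), ∀ᵐ z ∂(κ x), x = g z := by
      refine Measure.ae_ae_of_ae_compProd (p := fun p : X × Z => p.1 = g p.2) ?_
      rw [hdis, hρ, ae_map_iff hgm.aemeasurable hD]
      exact Filter.Eventually.of_forall fun z => rfl
    -- measurability of the a.e. property, to pull it back along `Prod.snd`
    have hPmeas : MeasurableSet {x : X | ∀ᵐ z ∂(κ x), x = g z} := by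
      have hset : {x : X | ∀ᵐ z ∂(κ x), x = g z}
          = (fun x => κ x (Prod.mk x ⁻¹' {p : X × Z | p.1 = g p.2}ᶜ)) ⁻¹' {0} := by
        ext x
        simp only [Set.mem_setOf_eq, Set.mem_preimage, Set.mem_singleton_iff, ae_iff]
        rfl
      rw [hset]
      exact (Kernel.measurable_kernel_prodMk_left hD.compl) (measurableSet_singleton 0)
    have hπae : ∀ᵐ p ∂π, ∀ᵐ z ∂(κ p.2), p.2 = g z := by
      rw [← h2] at hae
      exact (ae_map_iff measurable_snd.aemeasurable hPmeas).mp hae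
    -- build the lifted coupling on X × Z
    set κ2 : Kernel (X × X) Z := κ.comap Prod.snd measurable_snd with hκ2
    haveI : IsMarkovKernel κ2 := by rw [hκ2]; infer_instance
    set τ : Measure ((X × X) × Z) := π ⊗ₘ κ2 with hτ
    haveI : IsProbabilityMeasure τ := by rw [hτ]; infer_instance
    have hq : Measurable fun p : (X × X) × Z => (p.1.1, p.2) :=
      measurable_fst.fst.prodMk measurable_snd
    set π' : Measure (X × Z) := τ.map (fun p => (p.1.1, p.2)) with hπ'
    haveI : IsProbabilityMeasure π' := Measure.isProbabilityMeasure_map hq.aemeasurable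
    have hfst : π'.fst = P_X := by
      rw [hπ', Measure.fst, Measure.map_map measurable_fst hq]
      have he : (Prod.fst ∘ fun p : (X × X) × Z => (p.1.1, p.2)) = Prod.fst ∘ Prod.fst := rfl
      rw [he, ← Measure.map_map measurable_fst measurable_fst]
      have hτf : τ.map Prod.fst = π := Measure.fst_compProd π κ2
      rw [hτf, h1]
    have hsnd : π'.map Prod.snd = P_Z := by
      rw [hπ', Measure.map_map measurable_snd hq]
      have he : (Prod.snd ∘ fun p : (X × X) × Z => (p.1.1, p.2)) = Prod.snd := rfl
      rw [he, hτ]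
      ext s hs
      rw [Measure.map_apply measurable_snd hs, Measure.compProd_apply (measurable_snd hs)]
      have he2 : (fun y : X × X => κ2 y (Prod.mk y ⁻¹' (Prod.snd ⁻¹' s)))
          = fun y => κ y.2 s := rfl
      rw [he2, ← lintegral_map (Kernel.measurable_coe κ hs) measurable_snd, h2]
      have hcp := Measure.compProd_apply (μ := P_Z.map g) (κ := κ) (measurable_snd hs)
      have he3 : (fun a => κ a (Prod.mk a ⁻¹' (Prod.snd ⁻¹' s))) = fun a => κ a s := rfl
      rw [he3] at hcp
      rw [← hcp, hdis, hρ, Measure.map_apply hgm (measurable_snd hs)]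
      congr 1
    -- the kernel from disintegrating π'
    set Q : Kernel X Z := π'.condKernel with hQ
    haveI : IsMarkovKernel Q := by rw [hQ]; infer_instance
    have hdis' : P_X ⊗ₘ Q = π' := by rw [← hfst, hQ]; exact π'.disintegrate _
    have hbind : P_X.bind (fun x => Q x) = P_Z := by
      rw [bind_eq_map_snd_compProd, hdis', hsnd]
    have hcm2 : Measurable fun q : (X × X) × Z => c (q.1.1, g q.2) :=
      hc.comp ((measurable_fst.fst).prodMk (hg.comp measurable_snd))
    have step1 : ∫⁻ x, ∫⁻ z, c (x, g z) ∂(Q x) ∂P_X = ∫⁻ p : X × Z, c (p.1, g p.2) ∂π' := by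
      rw [← hdis', Measure.lintegral_compProd (f := fun p : X × Z => c (p.1, g p.2)) hcm]
    have step2 : ∫⁻ p : X × Z, c (p.1, g p.2) ∂π'
        = ∫⁻ q : (X × X) × Z, c (q.1.1, g q.2) ∂τ := by
      rw [hπ', lintegral_map hcm hq]
    have step3 : ∫⁻ q : (X × X) × Z, c (q.1.1, g q.2) ∂τ = ∫⁻ p, c p ∂π := by
      rw [hτ, Measure.lintegral_compProd (f := fun q : (X × X) × Z => c (q.1.1, g q.2)) hcm2]
      refine lintegral_congr_ae ?_
      filter_upwards [hπae] with y hy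
      show ∫⁻ z, c (y.1, g z) ∂(κ y.2) = c y
      have hinner : ∫⁻ z, c (y.1, g z) ∂(κ y.2) = ∫⁻ z, c y ∂(κ y.2) := by
        refine lintegral_congr_ae ?_
        filter_upwards [hy] with z hz
        rw [← hz]
      rw [hinner, lintegral_const, measure_univ, mul_one]
    have hval : ∫⁻ x, ∫⁻ z, c (x, g z) ∂(Q x) ∂P_X = ∫⁻ p, c p ∂π := by
      rw [step1, step2, step3]
    exact iInf_le_of_le Q (iInf_le_of_le inferInstance (iInf_le_of_le hbind hval.le))
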